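/- Let d ≥ 1, 0 < r < 1 and p, q ≥ r. Assume that for all real x, y ≥ 0 the numerical inequality (1 + (x + y)^r + (xy)^r)^{1/r} ≥ (1 + x^p)^{1/p} (1 + y^q)^{1/q} holds. Then for all f, g : ℤ^d → [0,∞) supported in {0,1}^d one has ‖f*g‖_{ℓ^r(ℤ^d)} ≥ ‖f‖_{ℓ^p(ℤ^d)} ‖g‖_{ℓ^q(ℤ^d)}. -/

import Mathlib

open scoped BigOperators ENNReal

/-- Convolution of two functions on `ℤ^d`. -/
noncomputable def cconv {d : ℕ} (f g : (Fin d → ℤ) → ℝ) : (Fin d → ℤ) → ℝ :=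
  fun m => ∑' u : Fin d → ℤ, f u * g (m - u)

/-- A point of `ℤ^d` lies in the hypercube `{0,1}^d`. -/
def InCube {d : ℕ} (x : Fin d → ℤ) : Prop := ∀ i, x i = 0 ∨ x i = 1

/-- A function on `ℤ^d` is supported in `{0,1}^d`. -/
def SupportedInCube {d : ℕ} (f : (Fin d → ℤ) → ℝ) : Prop :=
  ∀ x : Fin d → ℤ, ¬ InCube x → f x = 0

/-- The `ℓ^s` norm of a function on `ℤ^d` (for `0 < s < ∞`). -/
noncomputable def lnorm {d : ℕ} (s : ℝ) (f : (Fin d → ℤ) → ℝ) : ℝ :=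
  (∑' x : Fin d → ℤ, |f x| ^ s) ^ (1 / s)

open scoped NNReal

namespace RY


lemma rpow_rpow_inv {s x : ℝ} (hx : 0 ≤ x) (hs : s ≠ 0) : (x ^ s) ^ (1/s) = x := by
  rw [← Real.rpow_mul hx, mul_one_div, div_self hs, Real.rpow_one]

lemma rpow_inv_rpow' {s x : ℝ} (hx : 0 ≤ x) (hs : s ≠ 0) : (x ^ (1/s)) ^ s = x := by
  rw [← Real.rpow_mul hx, one_div, inv_mul_cancel₀ hs, Real.rpow_one]

lemma mono2 {r q : ℝ} (hr : 0 < r) (hrq : r ≤ q) {x y : ℝ} (hx : 0 ≤ x) (hy : 0 ≤ y) :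
    (x ^ q + y ^ q) ^ (1/q) ≤ (x ^ r + y ^ r) ^ (1/r) := by
  lift x to ℝ≥0 using hx
  lift y to ℝ≥0 using hy
  exact_mod_cast NNReal.rpow_add_rpow_le x y hr hrq

lemma concave_pt {r : ℝ} (hr0 : 0 < r) (hr1 : r < 1) {x y a b : ℝ}
    (hx : 0 ≤ x) (hy : 0 ≤ y) (ha : 0 ≤ a) (hb : 0 ≤ b) (hab : a + b = 1) :
    a ^ (1 - r) * x ^ r + b ^ (1 - r) * y ^ r ≤ (x + y) ^ r := by
  have h1r : (1 : ℝ) - r ≠ 0 := by linarith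
  rcases eq_or_lt_of_le ha with h | hapos
  · rw [← h]
    rw [Real.zero_rpow h1r, zero_mul, zero_add]
    have hb1 : b = 1 := by linarith
    rw [hb1, Real.one_rpow, one_mul]
    exact Real.rpow_le_rpow hy (by linarith) hr0.le
  rcases eq_or_lt_of_le hb with h | hbpos
  · rw [← h]
    rw [Real.zero_rpow h1r, zero_mul, add_zero]
    have ha1 : a = 1 := by linarith
    rw [ha1, Real.one_rpow, one_mul]
    exact Real.rpow_le_rpow hx (by linarith) hr0.le
  have h := (Real.strictConcaveOn_rpow hr0 hr1).concaveOn.2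
    (Set.mem_Ici.mpr (div_nonneg hx hapos.le)) (Set.mem_Ici.mpr (div_nonneg hy hbpos.le))
    ha hb hab
  simp only [smul_eq_mul] at h
  have e1 : a * (x / a) = x := by field_simp
  have e2 : b * (y / b) = y := by field_simp
  rw [e1, e2] at h
  have e3 : a * (x / a) ^ r = a ^ (1 - r) * x ^ r := by
    rw [Real.div_rpow hx hapos.le, Real.rpow_sub hapos, Real.rpow_one]
    ring
  have e4 : b * (y / b) ^ r = b ^ (1 - r) * y ^ r := by
    rw [Real.div_rpow hy hbpos.le, Real.rpow_sub hbpos, Real.rpow_one]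
    ring
  rw [e3, e4] at h
  exact h

lemma revMink {ι : Type*} {r : ℝ} (hr0 : 0 < r) (hr1 : r < 1)
    (h1 h2 : ι → ℝ) (h1n : ∀ i, 0 ≤ h1 i) (h2n : ∀ i, 0 ≤ h2 i)
    (s1 : Summable fun i => h1 i ^ r) (s2 : Summable fun i => h2 i ^ r)
    (s12 : Summable fun i => (h1 i + h2 i) ^ r) :
    ((∑' i, h1 i ^ r) ^ (1/r) + (∑' i, h2 i ^ r) ^ (1/r)) ^ r ≤ ∑' i, (h1 i + h2 i) ^ r := by
  have hT1n : 0 ≤ ∑' i, h1 i ^ r := tsum_nonneg fun i => Real.rpow_nonneg (h1n i) r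
  have hT2n : 0 ≤ ∑' i, h2 i ^ r := tsum_nonneg fun i => Real.rpow_nonneg (h2n i) r
  set N1 := (∑' i, h1 i ^ r) ^ (1/r) with hN1def
  set N2 := (∑' i, h2 i ^ r) ^ (1/r) with hN2def
  have hN1 : 0 ≤ N1 := Real.rpow_nonneg hT1n _
  have hN2 : 0 ≤ N2 := Real.rpow_nonneg hT2n _
  rcases eq_or_lt_of_le (add_nonneg hN1 hN2) with hS | hS
  · rw [← hS, Real.zero_rpow hr0.ne']
    exact tsum_nonneg fun i => Real.rpow_nonneg (add_nonneg (h1n i) (h2n i)) r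
  have hSne : N1 + N2 ≠ 0 := hS.ne'
  set a := N1 / (N1 + N2) with hadef
  set b := N2 / (N1 + N2) with hbdef
  have ha : 0 ≤ a := div_nonneg hN1 hS.le
  have hb : 0 ≤ b := div_nonneg hN2 hS.le
  have hab : a + b = 1 := by
    rw [hadef, hbdef, ← add_div, div_self hSne]
  have hptw : ∀ i, a ^ (1-r) * h1 i ^ r + b ^ (1-r) * h2 i ^ r ≤ (h1 i + h2 i) ^ r :=
    fun i => concave_pt hr0 hr1 (h1n i) (h2n i) ha hb hab
  have hsum : Summable fun i => a ^ (1-r) * h1 i ^ r + b ^ (1-r) * h2 i ^ r :=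
    (s1.mul_left _).add (s2.mul_left _)
  have h := Summable.tsum_le_tsum hptw hsum s12
  rw [Summable.tsum_add (s1.mul_left _) (s2.mul_left _), tsum_mul_left, tsum_mul_left] at h
  have key : ∀ N T : ℝ, 0 ≤ T → N = T ^ (1/r) →
      (N / (N1 + N2)) ^ (1-r) * T = (N / (N1 + N2)) * (N1 + N2) ^ r := by
    intro N T hT hNT
    have hTN : T = N ^ r := by rw [hNT]; exact (rpow_inv_rpow' hT hr0.ne').symm
    have hNn : 0 ≤ N := hNT ▸ Real.rpow_nonneg hT _
    rcases eq_or_lt_of_le hNn with h0 | h0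
    · rw [hTN, ← h0]
      simp [Real.zero_rpow hr0.ne']
    · have hc : 0 < N / (N1 + N2) := div_pos h0 hS
      have hNc : N = (N / (N1 + N2)) * (N1 + N2) := by field_simp
      have hNr : N ^ r = (N / (N1 + N2)) ^ r * (N1 + N2) ^ r := by
        rw [← Real.mul_rpow hc.le hS.le, div_mul_cancel₀ _ hSne]
      calc (N / (N1 + N2)) ^ (1-r) * T
          = (N / (N1 + N2)) ^ (1-r) * ((N / (N1 + N2)) ^ r * (N1 + N2) ^ r) := by
            rw [hTN, hNr]
        _ = ((N / (N1 + N2)) ^ (1-r) * (N / (N1 + N2)) ^ r) * (N1 + N2) ^ r := by ring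
        _ = (N / (N1 + N2)) * (N1 + N2) ^ r := by
            rw [← Real.rpow_add hc, sub_add_cancel, Real.rpow_one]
  have e1 := key N1 (∑' i, h1 i ^ r) hT1n hN1def
  have e2 := key N2 (∑' i, h2 i ^ r) hT2n hN2def
  rw [← hadef] at e1
  rw [← hbdef] at e2
  rw [e1, e2] at h
  have : a * (N1 + N2) ^ r + b * (N1 + N2) ^ r = (N1 + N2) ^ r := by
    rw [← add_mul, hab, one_mul]
  linarith

lemma key_scalar {r p q : ℝ} (hr0 : 0 < r) (hr1 : r < 1) (hpr : r ≤ p) (hqr : r ≤ q)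
    (hnum : ∀ x y : ℝ, 0 ≤ x → 0 ≤ y →
      (1 + x ^ p) ^ (1 / p) * (1 + y ^ q) ^ (1 / q) ≤
        (1 + (x + y) ^ r + (x * y) ^ r) ^ (1 / r))
    {A0 A1 B0 B1 : ℝ} (hA0 : 0 ≤ A0) (hA1 : 0 ≤ A1) (hB0 : 0 ≤ B0) (hB1 : 0 ≤ B1) :
    (A0 ^ p + A1 ^ p) ^ (1 / p) * (B0 ^ q + B1 ^ q) ^ (1 / q) ≤
      ((A0 * B0) ^ r + (A0 * B1 + A1 * B0) ^ r + (A1 * B1) ^ r) ^ (1 / r) := by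
  have hp : 0 < p := lt_of_lt_of_le hr0 hpr
  have hq : 0 < q := lt_of_lt_of_le hr0 hqr
  rcases eq_or_lt_of_le hA0 with h0 | hA0p
  · rw [← h0]
    simp only [Real.zero_rpow hp.ne', Real.zero_rpow hr0.ne', zero_mul, zero_add, add_zero,
      mul_zero]
    rw [rpow_rpow_inv hA1 hp.ne']
    have e : (A1 * B0) ^ r + (A1 * B1) ^ r = A1 ^ r * (B0 ^ r + B1 ^ r) := by
      rw [Real.mul_rpow hA1 hB0, Real.mul_rpow hA1 hB1]; ring
    rw [e, Real.mul_rpow (Real.rpow_nonneg hA1 r)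
      (add_nonneg (Real.rpow_nonneg hB0 r) (Real.rpow_nonneg hB1 r)),
      rpow_rpow_inv hA1 hr0.ne']
    exact mul_le_mul_of_nonneg_left (mono2 hr0 hqr hB0 hB1) hA1
  rcases eq_or_lt_of_le hB0 with h0 | hB0p
  · rw [← h0]
    simp only [Real.zero_rpow hq.ne', Real.zero_rpow hr0.ne', zero_mul, mul_zero, zero_add,
      add_zero]
    rw [rpow_rpow_inv hB1 hq.ne']
    have e : (A0 * B1) ^ r + (A1 * B1) ^ r = (A0 ^ r + A1 ^ r) * B1 ^ r := by
      rw [Real.mul_rpow hA0 hB1, Real.mul_rpow hA1 hB1]; ring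
    rw [e, Real.mul_rpow
      (add_nonneg (Real.rpow_nonneg hA0 r) (Real.rpow_nonneg hA1 r))
      (Real.rpow_nonneg hB1 r),
      rpow_rpow_inv hB1 hr0.ne']
    exact mul_le_mul_of_nonneg_right (mono2 hr0 hpr hA0 hA1) hB1
  have hx : 0 ≤ A1 / A0 := div_nonneg hA1 hA0p.le
  have hy : 0 ≤ B1 / B0 := div_nonneg hB1 hB0p.le
  have h := hnum (A1 / A0) (B1 / B0) hx hy
  have hA0pp : (0:ℝ) < A0 ^ p := Real.rpow_pos_of_pos hA0p p
  have hB0qp : (0:ℝ) < B0 ^ q := Real.rpow_pos_of_pos hB0p q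
  have e1 : (A0 ^ p + A1 ^ p) ^ (1/p) = A0 * (1 + (A1/A0) ^ p) ^ (1/p) := by
    have hfrac : (A1 / A0) ^ p = A1 ^ p / A0 ^ p := Real.div_rpow hA1 hA0p.le p
    have h1 : (0:ℝ) ≤ 1 + A1 ^ p / A0 ^ p := by
      have := div_nonneg (Real.rpow_nonneg hA1 p) hA0pp.le; linarith
    have hfactor : A0 ^ p + A1 ^ p = A0 ^ p * (1 + A1 ^ p / A0 ^ p) := by
      field_simp
    rw [hfrac, hfactor, Real.mul_rpow hA0pp.le h1, rpow_rpow_inv hA0 hp.ne']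
  have e2 : (B0 ^ q + B1 ^ q) ^ (1/q) = B0 * (1 + (B1/B0) ^ q) ^ (1/q) := by
    have hfrac : (B1 / B0) ^ q = B1 ^ q / B0 ^ q := Real.div_rpow hB1 hB0p.le q
    have h1 : (0:ℝ) ≤ 1 + B1 ^ q / B0 ^ q := by
      have := div_nonneg (Real.rpow_nonneg hB1 q) hB0qp.le; linarith
    have hfactor : B0 ^ q + B1 ^ q = B0 ^ q * (1 + B1 ^ q / B0 ^ q) := by
      field_simp
    rw [hfrac, hfactor, Real.mul_rpow hB0qp.le h1, rpow_rpow_inv hB0 hq.ne']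
  have hxy : 0 ≤ A1 / A0 + B1 / B0 := add_nonneg hx hy
  have hxym : 0 ≤ A1 / A0 * (B1 / B0) := mul_nonneg hx hy
  have hZ : (0:ℝ) ≤ 1 + (A1/A0 + B1/B0) ^ r + (A1/A0 * (B1/B0)) ^ r := by
    have := Real.rpow_nonneg hxy r
    have := Real.rpow_nonneg hxym r
    linarith
  have hA0B0 : (0:ℝ) ≤ A0 * B0 := mul_nonneg hA0 hB0
  have e3 : ((A0 * B0) ^ r + (A0 * B1 + A1 * B0) ^ r + (A1 * B1) ^ r) ^ (1/r)
      = (A0 * B0) * (1 + (A1/A0 + B1/B0) ^ r + (A1/A0 * (B1/B0)) ^ r) ^ (1/r) := by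
    have c1 : A0 * B1 + A1 * B0 = (A0 * B0) * (A1/A0 + B1/B0) := by
      field_simp; ring
    have c2 : A1 * B1 = (A0 * B0) * (A1/A0 * (B1/B0)) := by
      field_simp
    rw [c1, c2]
    rw [show (A0 * B0) ^ r + (A0 * B0 * (A1/A0 + B1/B0)) ^ r
          + (A0 * B0 * (A1/A0 * (B1/B0))) ^ r
        = (A0 * B0) ^ r * (1 + (A1/A0 + B1/B0) ^ r + (A1/A0 * (B1/B0)) ^ r) by
      rw [Real.mul_rpow hA0B0 hxy, Real.mul_rpow hA0B0 hxym]; ring]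
    rw [Real.mul_rpow (Real.rpow_nonneg hA0B0 r) hZ, rpow_rpow_inv hA0B0 hr0.ne']
  rw [e1, e2, e3]
  calc A0 * (1 + (A1/A0) ^ p) ^ (1/p) * (B0 * (1 + (B1/B0) ^ q) ^ (1/q))
      = (A0 * B0) * ((1 + (A1/A0) ^ p) ^ (1/p) * (1 + (B1/B0) ^ q) ^ (1/q)) := by ring
    _ ≤ (A0 * B0) * (1 + (A1/A0 + B1/B0) ^ r + (A1/A0 * (B1/B0)) ^ r) ^ (1/r) :=
      mul_le_mul_of_nonneg_left h hA0B0



def cubeF (d : ℕ) : Finset (Fin d → ℤ) := Fintype.piFinset fun _ => ({0, 1} : Finset ℤ)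

def cube3F (d : ℕ) : Finset (Fin d → ℤ) := Fintype.piFinset fun _ => ({0, 1, 2} : Finset ℤ)

lemma mem_cubeF {d : ℕ} {x : Fin d → ℤ} : x ∈ cubeF d ↔ InCube x := by
  simp [cubeF, Fintype.mem_piFinset, InCube]

lemma mem_cube3F {d : ℕ} {x : Fin d → ℤ} :
    x ∈ cube3F d ↔ ∀ i, x i = 0 ∨ x i = 1 ∨ x i = 2 := by
  simp [cube3F, Fintype.mem_piFinset]

lemma supp_zero {d : ℕ} {f : (Fin d → ℤ) → ℝ} (hf : SupportedInCube f) {x : Fin d → ℤ}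
    (hx : x ∉ cubeF d) : f x = 0 :=
  hf x fun h => hx (mem_cubeF.mpr h)

lemma cconv_nonneg {d : ℕ} {f g : (Fin d → ℤ) → ℝ} (hf0 : ∀ x, 0 ≤ f x)
    (hg0 : ∀ x, 0 ≤ g x) : ∀ m, 0 ≤ cconv f g m :=
  fun _ => tsum_nonneg fun u => mul_nonneg (hf0 u) (hg0 _)

lemma cconv_supp {d : ℕ} {f g : (Fin d → ℤ) → ℝ} (hf : SupportedInCube f)
    (hg : SupportedInCube g) {m : Fin d → ℤ} (hm : m ∉ cube3F d) : cconv f g m = 0 := by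
  have hz : ∀ u, f u * g (m - u) = 0 := by
    intro u
    by_cases hfu : f u = 0
    · rw [hfu, zero_mul]
    by_cases hgu : g (m - u) = 0
    · rw [hgu, mul_zero]
    exfalso
    apply hm
    have hu : InCube u := by by_contra h; exact hfu (hf u h)
    have hv : InCube (m - u) := by by_contra h; exact hgu (hg _ h)
    rw [mem_cube3F]
    intro i
    have h1 := hu i
    have h2 := hv i
    rw [Pi.sub_apply] at h2
    omega
  simp [cconv, hz]

lemma lnorm_eq {d : ℕ} {s : ℝ} (f : (Fin d → ℤ) → ℝ) (hf0 : ∀ x, 0 ≤ f x) :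
    lnorm s f = (∑' x, f x ^ s) ^ (1/s) := by
  unfold lnorm
  rw [tsum_congr fun x => by rw [abs_of_nonneg (hf0 x)]]

lemma lnorm_nonneg {d : ℕ} (s : ℝ) (f : (Fin d → ℤ) → ℝ) : 0 ≤ lnorm s f :=
  Real.rpow_nonneg (tsum_nonneg fun x => Real.rpow_nonneg (abs_nonneg _) s) _

lemma lnorm_rpow {d : ℕ} {s : ℝ} (hs : 0 < s) (f : (Fin d → ℤ) → ℝ) (hf0 : ∀ x, 0 ≤ f x) :
    (lnorm s f) ^ s = ∑' x, f x ^ s := by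
  rw [lnorm_eq f hf0]
  exact rpow_inv_rpow' (tsum_nonneg fun x => Real.rpow_nonneg (hf0 x) s) hs.ne'

def consE (d : ℕ) : (ℤ × (Fin d → ℤ)) ≃ (Fin (d+1) → ℤ) where
  toFun p := Fin.cons p.1 p.2
  invFun x := (x 0, fun i => x i.succ)
  left_inv p := by
    obtain ⟨a, x⟩ := p
    simp
  right_inv x := by
    funext i
    refine Fin.cases ?_ (fun i => ?_) i <;> simp

lemma consE_apply {d : ℕ} (p : ℤ × (Fin d → ℤ)) : consE d p = Fin.cons p.1 p.2 := rfl

lemma cons_sub {d : ℕ} (k j : ℤ) (m u : Fin d → ℤ) :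
    (Fin.cons k m - Fin.cons j u : Fin (d+1) → ℤ) = Fin.cons (k - j) (m - u) := by
  funext i
  refine Fin.cases ?_ (fun i => ?_) i <;> simp [Pi.sub_apply]

lemma cons_mem_of_ne_zero {d : ℕ} {f : (Fin (d+1) → ℤ) → ℝ} (hf : SupportedInCube f)
    {j : ℤ} {x' : Fin d → ℤ} (h : f (Fin.cons j x') ≠ 0) :
    j ∈ ({0, 1} : Finset ℤ) ∧ x' ∈ cubeF d := by
  have hc : InCube (Fin.cons j x') := by by_contra hc; exact h (hf _ hc)
  constructor
  · have := hc 0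
    simp only [Fin.cons_zero] at this
    simpa using this
  · rw [mem_cubeF]
    intro i
    have := hc i.succ
    simpa using this

lemma cons_mem3_of_ne_zero {d : ℕ} {c : (Fin (d+1) → ℤ) → ℝ}
    (hcs : ∀ m ∉ cube3F (d+1), c m = 0) {k : ℤ} {x' : Fin d → ℤ}
    (h : c (Fin.cons k x') ≠ 0) :
    k ∈ ({0, 1, 2} : Finset ℤ) ∧ x' ∈ cube3F d := by
  have hm : Fin.cons k x' ∈ cube3F (d+1) := by by_contra hm; exact h (hcs _ hm)
  rw [mem_cube3F] at hm
  constructor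
  · have := hm 0
    simp only [Fin.cons_zero] at this
    simpa using this
  · rw [mem_cube3F]
    intro i
    have := hm i.succ
    simpa using this

lemma tsum_split {d : ℕ} (φ : (Fin (d+1) → ℤ) → ℝ) (t : Finset ℤ) (s : Finset (Fin d → ℤ))
    (hsupp : ∀ (j : ℤ) (x' : Fin d → ℤ), φ (Fin.cons j x') ≠ 0 → j ∈ t ∧ x' ∈ s) :
    ∑' x, φ x = ∑ j ∈ t, ∑' x', φ (Fin.cons j x') := by
  have hz : ∀ p : ℤ × (Fin d → ℤ), p ∉ t ×ˢ s → φ (Fin.cons p.1 p.2) = 0 := by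
    intro p hp
    by_contra h
    exact hp (Finset.mem_product.mpr (hsupp p.1 p.2 h))
  have hsum : Summable fun p : ℤ × (Fin d → ℤ) => φ (Fin.cons p.1 p.2) :=
    summable_of_ne_finset_zero hz
  have hsum2 : ∀ j : ℤ, Summable fun x' => φ (Fin.cons j x') := by
    intro j
    apply summable_of_ne_finset_zero (s := s)
    intro x' hx'
    by_contra h
    exact hx' (hsupp j x' h).2
  rw [← Equiv.tsum_eq (consE d) φ]
  simp only [consE_apply]
  rw [Summable.tsum_prod' hsum hsum2]
  exact tsum_eq_sum fun j hj => by
    have hzz : ∀ x', φ (Fin.cons j x') = 0 := fun x' => by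
      by_contra h; exact hj (hsupp j x' h).1
    simp [hzz]

lemma slice {d : ℕ} {f g : (Fin (d+1) → ℤ) → ℝ} (hf : SupportedInCube f)
    (hg : SupportedInCube g) (k : ℤ) (m' : Fin d → ℤ) :
    cconv f g (Fin.cons k m') =
      ∑ j ∈ ({0, 1} : Finset ℤ),
        cconv (fun x' => f (Fin.cons j x')) (fun x' => g (Fin.cons (k - j) x')) m' := by
  have hsupp : ∀ (j : ℤ) (x' : Fin d → ℤ),
      f (Fin.cons j x') * g (Fin.cons k m' - Fin.cons j x') ≠ 0 →
      j ∈ ({0, 1} : Finset ℤ) ∧ x' ∈ cubeF d := by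
    intro j x' h
    have hne : f (Fin.cons j x') ≠ 0 := fun h0 => h (by rw [h0, zero_mul])
    exact cons_mem_of_ne_zero hf hne
  have hspl := tsum_split (fun u => f u * g (Fin.cons k m' - u)) ({0, 1} : Finset ℤ)
    (cubeF d) hsupp
  rw [show cconv f g (Fin.cons k m') = ∑' u, f u * g (Fin.cons k m' - u) from rfl, hspl]
  refine Finset.sum_congr rfl fun j _ => ?_
  show (∑' x', f (Fin.cons j x') * g (Fin.cons k m' - Fin.cons j x')) = _
  simp only [cconv]
  exact tsum_congr fun x' => by rw [cons_sub]


theorem main {r p q : ℝ} (hr0 : 0 < r) (hr1 : r < 1) (hpr : r ≤ p) (hqr : r ≤ q)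
    (hnum : ∀ x y : ℝ, 0 ≤ x → 0 ≤ y →
      (1 + x ^ p) ^ (1 / p) * (1 + y ^ q) ^ (1 / q) ≤
        (1 + (x + y) ^ r + (x * y) ^ r) ^ (1 / r)) :
    ∀ (d : ℕ) (f g : (Fin d → ℤ) → ℝ), (∀ x, 0 ≤ f x) → (∀ x, 0 ≤ g x) →
      SupportedInCube f → SupportedInCube g →
      lnorm p f * lnorm q g ≤ lnorm r (cconv f g) := by
  have hp : 0 < p := lt_of_lt_of_le hr0 hpr
  have hq : 0 < q := lt_of_lt_of_le hr0 hqr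
  intro d
  induction d with
  | zero =>
    intro f g hf0 hg0 hf hg
    have hl : ∀ s : ℝ, 0 < s → ∀ h : (Fin 0 → ℤ) → ℝ, (∀ x, 0 ≤ h x) →
        lnorm s h = h default := by
      intro s hs h h0
      rw [lnorm_eq h h0,
        tsum_eq_single default fun b hb => absurd (Subsingleton.elim b default) hb]
      exact rpow_rpow_inv (h0 _) hs.ne'
    have hconv : cconv f g default = f default * g default := by
      rw [show cconv f g default = ∑' u, f u * g (default - u) from rfl,
        tsum_eq_single default fun b hb => absurd (Subsingleton.elim b default) hb,
        show (default - default : Fin 0 → ℤ) = default from Subsingleton.elim _ _]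
    rw [hl p hp f hf0, hl q hq g hg0, hl r hr0 (cconv f g) (cconv_nonneg hf0 hg0), hconv]
  | succ d ih =>
    intro f g hf0 hg0 hf hg
    have h01 : (0 : ℤ) ≠ 1 := by decide
    have hFs : ∀ j : ℤ, SupportedInCube fun x' => f (Fin.cons j x') := by
      intro j x' hx'
      apply hf
      intro hc
      apply hx'
      intro i
      have := hc i.succ
      simpa using this
    have hGs : ∀ j : ℤ, SupportedInCube fun x' => g (Fin.cons j x') := by
      intro j x' hx'
      apply hg
      intro hc
      apply hx'
      intro i
      have := hc i.succ
      simpa using this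
    have hGzero : ∀ j : ℤ, j ∉ ({0, 1} : Finset ℤ) → ∀ x', g (Fin.cons j x') = 0 := by
      intro j hj x'
      by_contra h
      exact hj (cons_mem_of_ne_zero hg h).1
    have IH : ∀ i j : ℤ,
        lnorm p (fun x' => f (Fin.cons i x')) * lnorm q (fun x' => g (Fin.cons j x')) ≤
          lnorm r (cconv (fun x' => f (Fin.cons i x')) (fun x' => g (Fin.cons j x'))) :=
      fun i j => ih _ _ (fun _ => hf0 _) (fun _ => hg0 _) (hFs i) (hGs j)
    have hcn : ∀ i j : ℤ, ∀ m',
        0 ≤ cconv (fun x' => f (Fin.cons i x')) (fun x' => g (Fin.cons j x')) m' :=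
      fun i j => cconv_nonneg (fun _ => hf0 _) (fun _ => hg0 _)
    have hA : ∑' x, f x ^ p
        = (lnorm p fun x' => f (Fin.cons 0 x')) ^ p
          + (lnorm p fun x' => f (Fin.cons 1 x')) ^ p := by
      have hsp : ∀ (j : ℤ) (x' : Fin d → ℤ), f (Fin.cons j x') ^ p ≠ 0 →
          j ∈ ({0, 1} : Finset ℤ) ∧ x' ∈ cubeF d := by
        intro j x' hne
        refine cons_mem_of_ne_zero hf fun h0 => hne ?_
        rw [h0, Real.zero_rpow hp.ne']
      rw [tsum_split (fun x => f x ^ p) ({0, 1} : Finset ℤ) (cubeF d) hsp,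
        Finset.sum_pair h01]
      congr 1
      · exact (lnorm_rpow hp _ fun _ => hf0 _).symm
      · exact (lnorm_rpow hp _ fun _ => hf0 _).symm
    have hB : ∑' x, g x ^ q
        = (lnorm q fun x' => g (Fin.cons 0 x')) ^ q
          + (lnorm q fun x' => g (Fin.cons 1 x')) ^ q := by
      have hsp : ∀ (j : ℤ) (x' : Fin d → ℤ), g (Fin.cons j x') ^ q ≠ 0 →
          j ∈ ({0, 1} : Finset ℤ) ∧ x' ∈ cubeF d := by
        intro j x' hne
        refine cons_mem_of_ne_zero hg fun h0 => hne ?_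
        rw [h0, Real.zero_rpow hq.ne']
      rw [tsum_split (fun x => g x ^ q) ({0, 1} : Finset ℤ) (cubeF d) hsp,
        Finset.sum_pair h01]
      congr 1
      · exact (lnorm_rpow hq _ fun _ => hg0 _).symm
      · exact (lnorm_rpow hq _ fun _ => hg0 _).symm
    have hs0 : ∀ m' : Fin d → ℤ, cconv f g (Fin.cons 0 m')
        = cconv (fun x' => f (Fin.cons 0 x')) (fun x' => g (Fin.cons 0 x')) m' := by
      intro m'
      rw [slice hf hg 0 m', Finset.sum_pair h01]
      have hz : cconv (fun x' => f (Fin.cons 1 x'))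
          (fun x' => g (Fin.cons ((0:ℤ) - 1) x')) m' = 0 := by
        have hgz : ∀ x', g (Fin.cons (-1 : ℤ) x') = 0 := hGzero _ (by decide)
        have hgz' : ∀ x', g (Fin.cons ((0:ℤ) - 1) x') = 0 := by norm_num [hgz]
        simp [cconv, hgz, hgz']
      rw [hz, add_zero]
      norm_num
    have hs1 : ∀ m' : Fin d → ℤ, cconv f g (Fin.cons 1 m')
        = cconv (fun x' => f (Fin.cons 0 x')) (fun x' => g (Fin.cons 1 x')) m'
          + cconv (fun x' => f (Fin.cons 1 x')) (fun x' => g (Fin.cons 0 x')) m' := by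
      intro m'
      rw [slice hf hg 1 m', Finset.sum_pair h01]
      norm_num
    have hs2 : ∀ m' : Fin d → ℤ, cconv f g (Fin.cons 2 m')
        = cconv (fun x' => f (Fin.cons 1 x')) (fun x' => g (Fin.cons 1 x')) m' := by
      intro m'
      rw [slice hf hg 2 m', Finset.sum_pair h01]
      have hz : cconv (fun x' => f (Fin.cons 0 x'))
          (fun x' => g (Fin.cons ((2:ℤ) - 0) x')) m' = 0 := by
        have hgz : ∀ x', g (Fin.cons (2 : ℤ) x') = 0 := hGzero _ (by decide)
        have hgz' : ∀ x', g (Fin.cons ((2:ℤ) - 0) x') = 0 := by norm_num [hgz]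
        simp [cconv, hgz, hgz']
      rw [hz, zero_add]
      norm_num
    have hsum3 : ∀ ψ : ℤ → ℝ, ∑ k ∈ ({0, 1, 2} : Finset ℤ), ψ k = ψ 0 + ψ 1 + ψ 2 := by
      intro ψ
      rw [show ({0, 1, 2} : Finset ℤ) = insert 0 {1, 2} from rfl,
        Finset.sum_insert (by decide), Finset.sum_pair (by decide)]
      ring
    have hsR : ∀ (k : ℤ) (m' : Fin d → ℤ), cconv f g (Fin.cons k m') ^ r ≠ 0 →
        k ∈ ({0, 1, 2} : Finset ℤ) ∧ m' ∈ cube3F d := by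
      intro k m' hne
      refine cons_mem3_of_ne_zero (fun m hm => cconv_supp hf hg hm) fun h0 => hne ?_
      rw [h0, Real.zero_rpow hr0.ne']
    have hT : ∑' m, cconv f g m ^ r
        = (∑' m', cconv (fun x' => f (Fin.cons 0 x')) (fun x' => g (Fin.cons 0 x')) m' ^ r)
          + (∑' m', (cconv (fun x' => f (Fin.cons 0 x')) (fun x' => g (Fin.cons 1 x')) m'
              + cconv (fun x' => f (Fin.cons 1 x')) (fun x' => g (Fin.cons 0 x')) m') ^ r)
          + (∑' m', cconv (fun x' => f (Fin.cons 1 x')) (fun x' => g (Fin.cons 1 x')) m' ^ r) := by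
      rw [tsum_split (fun m => cconv f g m ^ r) ({0, 1, 2} : Finset ℤ) (cube3F d) hsR, hsum3]
      congr 1
      · congr 1
        · exact tsum_congr fun m' => by rw [hs0 m']
        · exact tsum_congr fun m' => by rw [hs1 m']
      · exact tsum_congr fun m' => by rw [hs2 m']
    have scv : ∀ F' G' : (Fin d → ℤ) → ℝ, SupportedInCube F' → SupportedInCube G' →
        Summable fun m' => cconv F' G' m' ^ r := by
      intro F' G' hF' hG'
      apply summable_of_ne_finset_zero (s := cube3F d)
      intro m hm
      rw [cconv_supp hF' hG' hm, Real.zero_rpow hr0.ne']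
    have scv2 : Summable fun m' =>
        (cconv (fun x' => f (Fin.cons 0 x')) (fun x' => g (Fin.cons 1 x')) m'
          + cconv (fun x' => f (Fin.cons 1 x')) (fun x' => g (Fin.cons 0 x')) m') ^ r := by
      apply summable_of_ne_finset_zero (s := cube3F d)
      intro m hm
      rw [cconv_supp (hFs 0) (hGs 1) hm, cconv_supp (hFs 1) (hGs 0) hm, add_zero,
        Real.zero_rpow hr0.ne']
    have h1r : (0:ℝ) ≤ 1 / r := le_of_lt (by positivity)
    have hT0 : (lnorm p (fun x' => f (Fin.cons 0 x'))
          * lnorm q (fun x' => g (Fin.cons 0 x'))) ^ r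
        ≤ ∑' m', cconv (fun x' => f (Fin.cons 0 x')) (fun x' => g (Fin.cons 0 x')) m' ^ r := by
      rw [← lnorm_rpow hr0 _ (hcn 0 0)]
      exact Real.rpow_le_rpow (mul_nonneg (lnorm_nonneg _ _) (lnorm_nonneg _ _))
        (IH 0 0) hr0.le
    have hT2 : (lnorm p (fun x' => f (Fin.cons 1 x'))
          * lnorm q (fun x' => g (Fin.cons 1 x'))) ^ r
        ≤ ∑' m', cconv (fun x' => f (Fin.cons 1 x')) (fun x' => g (Fin.cons 1 x')) m' ^ r := by
      rw [← lnorm_rpow hr0 _ (hcn 1 1)]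
      exact Real.rpow_le_rpow (mul_nonneg (lnorm_nonneg _ _) (lnorm_nonneg _ _))
        (IH 1 1) hr0.le
    have hT1 : (lnorm p (fun x' => f (Fin.cons 0 x')) * lnorm q (fun x' => g (Fin.cons 1 x'))
          + lnorm p (fun x' => f (Fin.cons 1 x')) * lnorm q (fun x' => g (Fin.cons 0 x'))) ^ r
        ≤ ∑' m', (cconv (fun x' => f (Fin.cons 0 x')) (fun x' => g (Fin.cons 1 x')) m'
            + cconv (fun x' => f (Fin.cons 1 x')) (fun x' => g (Fin.cons 0 x')) m') ^ r := by
      have hm := revMink hr0 hr1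
        (cconv (fun x' => f (Fin.cons 0 x')) (fun x' => g (Fin.cons 1 x')))
        (cconv (fun x' => f (Fin.cons 1 x')) (fun x' => g (Fin.cons 0 x')))
        (hcn 0 1) (hcn 1 0)
        (scv _ _ (hFs 0) (hGs 1)) (scv _ _ (hFs 1) (hGs 0)) scv2
      rw [← lnorm_eq _ (hcn 0 1), ← lnorm_eq _ (hcn 1 0)] at hm
      refine le_trans ?_ hm
      exact Real.rpow_le_rpow
        (add_nonneg (mul_nonneg (lnorm_nonneg _ _) (lnorm_nonneg _ _))
          (mul_nonneg (lnorm_nonneg _ _) (lnorm_nonneg _ _)))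
        (add_le_add (IH 0 1) (IH 1 0)) hr0.le
    rw [lnorm_eq f hf0, lnorm_eq g hg0, hA, hB,
      lnorm_eq (cconv f g) (cconv_nonneg hf0 hg0), hT]
    refine le_trans (key_scalar hr0 hr1 hpr hqr hnum (lnorm_nonneg _ _) (lnorm_nonneg _ _)
      (lnorm_nonneg _ _) (lnorm_nonneg _ _)) ?_
    refine Real.rpow_le_rpow ?_ (add_le_add (add_le_add hT0 hT1) hT2) h1r
    exact add_nonneg
      (add_nonneg
        (Real.rpow_nonneg (mul_nonneg (lnorm_nonneg _ _) (lnorm_nonneg _ _)) r)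
        (Real.rpow_nonneg
          (add_nonneg (mul_nonneg (lnorm_nonneg _ _) (lnorm_nonneg _ _))
            (mul_nonneg (lnorm_nonneg _ _) (lnorm_nonneg _ _))) r))
      (Real.rpow_nonneg (mul_nonneg (lnorm_nonneg _ _) (lnorm_nonneg _ _)) r)

end RY

theorem reverse_young_hypercube_from_numerical (d : ℕ) (hd : 1 ≤ d) (r p q : ℝ)
    (hr0 : 0 < r) (hr1 : r < 1) (hpr : r ≤ p) (hqr : r ≤ q)
    (hnum : ∀ x y : ℝ, 0 ≤ x → 0 ≤ y →
      (1 + x ^ p) ^ (1 / p) * (1 + y ^ q) ^ (1 / q) ≤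
        (1 + (x + y) ^ r + (x * y) ^ r) ^ (1 / r))
    (f g : (Fin d → ℤ) → ℝ) (hf0 : ∀ x, 0 ≤ f x) (hg0 : ∀ x, 0 ≤ g x)
    (hf : SupportedInCube f) (hg : SupportedInCube g) :
    lnorm p f * lnorm q g ≤ lnorm r (cconv f g) :=
  RY.main hr0 hr1 hpr hqr hnum d f g hf0 hg0 hf hg
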